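/- The function f(φ) = √(Tr φ_A²), defined on unit vectors φ ∈ C^{d_A} ⊗ C^{d_B} with φ_A = Tr_B |φ⟩⟨φ|, is Lipschitz with constant at most 2 with respect to the Euclidean norm. -/

import Mathlib

open scoped BigOperators ComplexOrder
open Matrix

noncomputable section

namespace QIT

variable {n : Type*} [Fintype n] [DecidableEq n]

/-- Density matrix of a pure state given by a unit vector. -/
def pureDM (φ : EuclideanSpace ℂ n) : Matrix n n ℂ :=
  Matrix.of fun i j => φ i * (starRingEnd ℂ) (φ j)

/-- A density matrix: positive semidefinite with unit trace. -/
def DensityMatrix (ρ : Matrix n n ℂ) : Prop := ρ.PosSemidef ∧ ρ.trace = 1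

/-- Von Neumann entropy (base 2), via the eigenvalues. -/
def vNEntropy (ρ : Matrix n n ℂ) : ℝ :=
  if h : ρ.IsHermitian then ∑ i, -(h.eigenvalues i * Real.logb 2 (h.eigenvalues i)) else 0

/-- Trace norm of a Hermitian matrix, via eigenvalues. -/
def traceNorm (M : Matrix n n ℂ) : ℝ :=
  if h : M.IsHermitian then ∑ i, |h.eigenvalues i| else 0

/-- Operator (spectral) norm. -/
def opNorm (M : Matrix n n ℂ) : ℝ := ‖Matrix.toEuclideanCLM (𝕜 := ℂ) M‖

/-- Apply a real function to a Hermitian matrix via the spectral theorem. -/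
def hermApply (f : ℝ → ℝ) (M : Matrix n n ℂ) : Matrix n n ℂ :=
  if h : M.IsHermitian then
    (h.eigenvectorUnitary : Matrix n n ℂ) * Matrix.diagonal (fun i => (f (h.eigenvalues i) : ℂ)) *
      (h.eigenvectorUnitary : Matrix n n ℂ)ᴴ
  else 0

/-- Matrix base-2 logarithm of a Hermitian matrix. -/
def mlog2 : Matrix n n ℂ → Matrix n n ℂ := hermApply (Real.logb 2)

/-- Matrix square root of a positive semidefinite matrix. -/
def msqrt : Matrix n n ℂ → Matrix n n ℂ := hermApply Real.sqrt

/-- Quantum relative entropy `D(ρ‖σ) = Tr ρ (log₂ ρ − log₂ σ)`. -/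
def relEnt (ρ σ : Matrix n n ℂ) : ℝ := ((ρ * (mlog2 ρ - mlog2 σ)).trace).re

/-- Uhlmann fidelity `F(ρ,σ) = (Tr √(√ρ σ √ρ))²`. -/
def fidelity (ρ σ : Matrix n n ℂ) : ℝ := (((msqrt (msqrt ρ * σ * msqrt ρ)).trace).re) ^ 2

/-- A projector. -/
def Projector (P : Matrix n n ℂ) : Prop := P.IsHermitian ∧ P * P = P

variable {dA dB : ℕ}

/-- Partial trace over the second factor. -/
def ptraceB (ρ : Matrix (Fin dA × Fin dB) (Fin dA × Fin dB) ℂ) : Matrix (Fin dA) (Fin dA) ℂ :=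
  Matrix.of fun a a' => ∑ b, ρ (a, b) (a', b)

/-- Partial trace over the first factor. -/
def ptraceA (ρ : Matrix (Fin dA × Fin dB) (Fin dA × Fin dB) ℂ) : Matrix (Fin dB) (Fin dB) ℂ :=
  Matrix.of fun b b' => ∑ a, ρ (a, b) (a, b')

/-- Kronecker (tensor) product of operators on the two factors. -/
def kron (P : Matrix (Fin dA) (Fin dA) ℂ) (Q : Matrix (Fin dB) (Fin dB) ℂ) :
    Matrix (Fin dA × Fin dB) (Fin dA × Fin dB) ℂ :=
  Matrix.of fun x y => P x.1 y.1 * Q x.2 y.2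

/-- Partial transpose on the second factor. -/
def ptransposeB (ρ : Matrix (Fin dA × Fin dB) (Fin dA × Fin dB) ℂ) :
    Matrix (Fin dA × Fin dB) (Fin dA × Fin dB) ℂ :=
  Matrix.of fun x y => ρ (x.1, y.2) (y.1, x.2)

/-- Bipartite separability. -/
def Separable (ρ : Matrix (Fin dA × Fin dB) (Fin dA × Fin dB) ℂ) : Prop :=
  ∃ (m : ℕ) (p : Fin m → ℝ) (a : Fin m → Matrix (Fin dA) (Fin dA) ℂ)
    (b : Fin m → Matrix (Fin dB) (Fin dB) ℂ),
    (∀ l, 0 ≤ p l) ∧ (∑ l, p l = 1) ∧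
    (∀ l, (a l).PosSemidef ∧ (a l).trace = 1) ∧
    (∀ l, (b l).PosSemidef ∧ (b l).trace = 1) ∧
    ρ = ∑ l, (p l : ℂ) • kron (a l) (b l)

/-- Entanglement of formation. -/
def EoF (ρ : Matrix (Fin dA × Fin dB) (Fin dA × Fin dB) ℂ) : ℝ :=
  sInf { x : ℝ | ∃ (m : ℕ) (p : Fin m → ℝ) (φ : Fin m → EuclideanSpace ℂ (Fin dA × Fin dB)),
    (∀ l, 0 ≤ p l) ∧ (∑ l, p l = 1) ∧ (∀ l, ‖φ l‖ = 1) ∧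
    (ρ = ∑ l, (p l : ℂ) • pureDM (φ l)) ∧
    x = ∑ l, p l * vNEntropy (ptraceB (pureDM (φ l))) }

end QIT

/-- `f(φ) = √(Tr φ_A²)`, the square root of the purity of the reduced state. -/
noncomputable def sqrtPurity (dA dB : ℕ) (φ : EuclideanSpace ℂ (Fin dA × Fin dB)) : ℝ :=
  Real.sqrt (((QIT.ptraceB (QIT.pureDM φ) * QIT.ptraceB (QIT.pureDM φ)).trace).re)


attribute [local instance] Matrix.frobeniusNormedAddCommGroup

private def mat (dA dB : ℕ) (φ : EuclideanSpace ℂ (Fin dA × Fin dB)) :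
    Matrix (Fin dA) (Fin dB) ℂ :=
  Matrix.of fun a b => φ (a, b)

private lemma mat_norm (dA dB : ℕ) (φ : EuclideanSpace ℂ (Fin dA × Fin dB)) :
    ‖mat dA dB φ‖ = ‖φ‖ := by
  rw [Matrix.frobenius_norm_def, EuclideanSpace.norm_eq, Real.sqrt_eq_rpow]
  congr 1
  rw [Fintype.sum_prod_type]
  simp [mat, Real.rpow_natCast]

private lemma ptraceB_pureDM_eq (dA dB : ℕ) (φ : EuclideanSpace ℂ (Fin dA × Fin dB)) :
    QIT.ptraceB (QIT.pureDM φ) = mat dA dB φ * (mat dA dB φ)ᴴ := by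
  ext a a'
  simp [QIT.ptraceB, QIT.pureDM, mat, Matrix.mul_apply, Matrix.conjTranspose_apply]

private lemma sqrtPurity_eq_norm (dA dB : ℕ) (φ : EuclideanSpace ℂ (Fin dA × Fin dB)) :
    sqrtPurity dA dB φ = ‖mat dA dB φ * (mat dA dB φ)ᴴ‖ := by
  set A : Matrix (Fin dA) (Fin dA) ℂ := mat dA dB φ * (mat dA dB φ)ᴴ with hA
  have hherm : Aᴴ = A := by
    rw [hA, Matrix.conjTranspose_mul, Matrix.conjTranspose_conjTranspose]
  have htr : ((A * A).trace).re = ∑ i, ∑ j, ‖A i j‖ ^ 2 := by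
    have h1 : (A * A).trace = ∑ i, ∑ j, A i j * (starRingEnd ℂ) (A i j) := by
      rw [Matrix.trace, ]
      simp only [Matrix.diag_apply, Matrix.mul_apply]
      refine Finset.sum_congr rfl fun i _ => Finset.sum_congr rfl fun j _ => ?_
      congr 1
      conv_rhs => rw [← hherm]
      rw [Matrix.conjTranspose_apply]
      simp
    rw [h1]
    simp only [Complex.mul_conj, Complex.re_sum, Complex.ofReal_re, Complex.normSq_eq_norm_sq]
  rw [sqrtPurity, ptraceB_pureDM_eq, ← hA, htr, Matrix.frobenius_norm_def,
    Real.sqrt_eq_rpow]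
  congr 1
  refine Finset.sum_congr rfl fun i _ => Finset.sum_congr rfl fun j _ => ?_
  rw [show ((2:ℝ)) = ((2:ℕ):ℝ) by norm_num, Real.rpow_natCast]

theorem sqrt_purity_lipschitz (dA dB : ℕ) :
    ∀ φ ψ : EuclideanSpace ℂ (Fin dA × Fin dB), ‖φ‖ = 1 → ‖ψ‖ = 1 →
      |sqrtPurity dA dB φ - sqrtPurity dA dB ψ| ≤ 2 * ‖φ - ψ‖ := by
  intro φ ψ hφ hψ
  set M := mat dA dB φ with hM
  set N := mat dA dB ψ with hN
  have hMn : ‖M‖ = 1 := by rw [hM, mat_norm, hφ]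
  have hNn : ‖N‖ = 1 := by rw [hN, mat_norm, hψ]
  have hMN : ‖M - N‖ = ‖φ - ψ‖ := by
    have : M - N = mat dA dB (φ - ψ) := by
      ext a b; simp [mat, hM, hN]
    rw [this, mat_norm]
  rw [sqrtPurity_eq_norm, sqrtPurity_eq_norm, ← hM, ← hN]
  calc |‖M * Mᴴ‖ - ‖N * Nᴴ‖| ≤ ‖M * Mᴴ - N * Nᴴ‖ := abs_norm_sub_norm_le _ _
    _ = ‖M * (Mᴴ - Nᴴ) + (M - N) * Nᴴ‖ := by
        congr 1
        rw [Matrix.mul_sub, Matrix.sub_mul]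
        abel
    _ ≤ ‖M * (Mᴴ - Nᴴ)‖ + ‖(M - N) * Nᴴ‖ := norm_add_le _ _
    _ ≤ ‖M‖ * ‖Mᴴ - Nᴴ‖ + ‖M - N‖ * ‖Nᴴ‖ := by
        gcongr <;> exact Matrix.frobenius_norm_mul _ _
    _ = 2 * ‖φ - ψ‖ := by
        rw [← Matrix.conjTranspose_sub, Matrix.frobenius_norm_conjTranspose,
          Matrix.frobenius_norm_conjTranspose, hMn, hNn, hMN]
        ring


end
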